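/- Assume $\mathrm{ad}_\pg X$ is skew-symmetric for every $X\in\pg$ and let $\delta_{\mu_\pg}(A)=-\theta(A)\mu_\pg$. Then for every symmetric $A$, $\langle\delta_{\mu_\pg}^t\delta_{\mu_\pg}(A),A\rangle = -4\sum_i\langle\Mm_{\mu_\pg}AX_i,AX_i\rangle + \langle\mathrm{Cas}_\pg(A),A\rangle$, where $\Mm_{\mu_\pg}=\tfrac14\sum_i(\mathrm{ad}_\pg X_i)^2$ and $\mathrm{Cas}_\pg(A)=-\sum_i[\mathrm{ad}_\pg X_i,[\mathrm{ad}_\pg X_i,A]]$. -/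

import Mathlib

noncomputable section

open RealInnerProductSpace

variable {V : Type*} [NormedAddCommGroup V] [InnerProductSpace ℝ V] [FiniteDimensional ℝ V]

/-- The representation `θ(A)λ = Aλ(·,·) - λ(A·,·) - λ(·,A·)`. -/
def theta (A : Module.End ℝ V) (lam : V → V → V) : V → V → V :=
  fun X Y => A (lam X Y) - lam (A X) Y - lam X (A Y)

/-- The inner product on `Λ²p*⊗p` relative to an orthonormal basis. -/
def bip {ι : Type*} [Fintype ι] (b : OrthonormalBasis ι ℝ V) (f g : V → V → V) : ℝ :=
  ∑ i, ∑ j, (inner ℝ (f (b i) (b j)) (g (b i) (b j)) : ℝ)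

/-- The trace inner product `⟨A,B⟩ = tr(A Bᵗ)` on `gl(p)`. -/
def eip (A B : Module.End ℝ V) : ℝ :=
  LinearMap.trace ℝ V (A ∘ₗ LinearMap.adjoint (B : V →ₗ[ℝ] V))

/-- Commutator of endomorphisms. -/
def opComm (P Q : Module.End ℝ V) : Module.End ℝ V := P ∘ₗ Q - Q ∘ₗ P

/-- `Cas_p(A) = -∑ [ad_p Xᵢ, [ad_p Xᵢ, A]]`. -/
def casOp {ι : Type*} [Fintype ι] (b : OrthonormalBasis ι ℝ V)
    (μ : V →ₗ[ℝ] V →ₗ[ℝ] V) (A : Module.End ℝ V) : Module.End ℝ V :=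
  -∑ i, opComm (μ (b i)) (opComm (μ (b i)) A)

/-- `δ_{μ_p}(A) := -θ(A)μ_p`. -/
def deltaMap (μ : V →ₗ[ℝ] V →ₗ[ℝ] V) (A : Module.End ℝ V) : V → V → V :=
  fun X Y => -(theta A (fun X' Y' => μ X' Y') X Y)

/- ### Auxiliary lemmas -/

set_option linter.unusedSectionVars false

lemma trace_eq_sum_inner' {n : ℕ} (b : OrthonormalBasis (Fin n) ℝ V) (T : Module.End ℝ V) :
    LinearMap.trace ℝ V T = ∑ i, ⟪T (b i), b i⟫ := by
  rw [LinearMap.trace_eq_matrix_trace ℝ b.toBasis, Matrix.trace]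
  refine Finset.sum_congr rfl fun i _ => ?_
  rw [Matrix.diag_apply, LinearMap.toMatrix_apply, OrthonormalBasis.coe_toBasis,
    OrthonormalBasis.coe_toBasis_repr_apply, OrthonormalBasis.repr_apply_apply,
    real_inner_comm]

lemma sum_inner_eq_trace {n : ℕ} (b : OrthonormalBasis (Fin n) ℝ V) (P Q : Module.End ℝ V) :
    ∑ j, ⟪P (b j), Q (b j)⟫ = LinearMap.trace ℝ V (LinearMap.adjoint Q ∘ₗ P) := by
  rw [trace_eq_sum_inner' b]
  refine Finset.sum_congr rfl fun j _ => ?_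
  rw [LinearMap.comp_apply, LinearMap.adjoint_inner_left]

lemma mu_expand {n : ℕ} (b : OrthonormalBasis (Fin n) ℝ V) (μ : V →ₗ[ℝ] V →ₗ[ℝ] V) (x : V) :
    μ x = ∑ k, ⟪b k, x⟫ • μ (b k) := by
  conv_lhs => rw [← b.sum_repr' x]
  rw [map_sum]
  exact Finset.sum_congr rfl fun k _ => by rw [map_smul]

lemma inner_expand (u v w : V) :
    ⟪u + v - w, u + v - w⟫ =
      ⟪u, u⟫ + ⟪v, v⟫ + ⟪w, w⟫ + 2 * ⟪u, v⟫ - 2 * ⟪u, w⟫ - 2 * ⟪v, w⟫ := by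
  simp only [inner_sub_left, inner_sub_right, inner_add_left, inner_add_right]
  rw [real_inner_comm v u, real_inner_comm w u, real_inner_comm w v]; ring

lemma tr_rot (P Q : Module.End ℝ V) :
    LinearMap.trace ℝ V (P * Q) = LinearMap.trace ℝ V (Q * P) := by
  rw [LinearMap.trace_mul_comm]

/-- in the naturally reductive case, for symmetric `A`,
`⟨δᵗδ(A), A⟩ = |δ(A)|² = -4 ∑ ⟨M_{μ_p} A Xᵢ, A Xᵢ⟩ + ⟨Cas_p(A), A⟩`,
where `M_{μ_p} = ¼ ∑ (ad_p Xᵢ)²`. -/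
theorem statement6 {n : ℕ} (b : OrthonormalBasis (Fin n) ℝ V)
    (μ : V →ₗ[ℝ] V →ₗ[ℝ] V) (halt : ∀ X, μ X X = 0)
    (hskew : ∀ X : V, LinearMap.adjoint (μ X) = -(μ X))
    (M : Module.End ℝ V)
    (hM : M = (1/4 : ℝ) • (∑ i, μ (b i) ∘ₗ μ (b i)))
    (A : Module.End ℝ V) (hA : LinearMap.IsSymmetric (A : V →ₗ[ℝ] V)) :
    bip b (deltaMap μ A) (deltaMap μ A) =
      -4 * (∑ i, (inner ℝ (M (A (b i))) (A (b i)) : ℝ)) + eip (casOp b μ A) A := by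
  classical
  have hAadj : LinearMap.adjoint (A : V →ₗ[ℝ] V) = A :=
    ((LinearMap.eq_adjoint_iff (A : V →ₗ[ℝ] V) (A : V →ₗ[ℝ] V)).mpr hA).symm
  have alt : ∀ x y, μ x y = -μ y x := by
    intro x y
    have h := halt (x + y)
    simp only [map_add, LinearMap.add_apply, halt, zero_add, add_zero] at h
    rw [eq_neg_of_add_eq_zero_right h]
  have skew : ∀ x y z : V, ⟪μ x y, z⟫ = -⟪y, μ x z⟫ := by
    intro x y z
    have h := LinearMap.adjoint_inner_left (μ x) z y
    rw [hskew x] at h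
    simp only [LinearMap.neg_apply, inner_neg_left] at h
    linarith
  have hdelta : ∀ x y, deltaMap μ A x y = μ (A x) y + μ x (A y) - A (μ x y) := by
    intro x y
    simp only [deltaMap, theta]
    abel
  -- expansion of a trace against μ of a vector
  have expand_tr : ∀ (P : Module.End ℝ V) (x : V),
      LinearMap.trace ℝ V (P * μ x) = ∑ k, ⟪b k, x⟫ * LinearMap.trace ℝ V (P * μ (b k)) := by
    intro P x
    rw [mu_expand b μ x, Finset.mul_sum, map_sum]
    exact Finset.sum_congr rfl fun k _ => by
      rw [mul_smul_comm, map_smul, smul_eq_mul]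
  -- the six double sums
  set u : Fin n → Fin n → V := fun i j => μ (A (b i)) (b j) with hu
  set v : Fin n → Fin n → V := fun i j => μ (b i) (A (b j)) with hv
  set w : Fin n → Fin n → V := fun i j => A (μ (b i) (b j)) with hw
  have hsplit : bip b (deltaMap μ A) (deltaMap μ A) =
      (∑ i, ∑ j, ⟪u i j, u i j⟫) + (∑ i, ∑ j, ⟪v i j, v i j⟫) + (∑ i, ∑ j, ⟪w i j, w i j⟫)
      + 2 * (∑ i, ∑ j, ⟪u i j, v i j⟫) - 2 * (∑ i, ∑ j, ⟪u i j, w i j⟫)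
      - 2 * (∑ i, ∑ j, ⟪v i j, w i j⟫) := by
    have key : ∀ i j : Fin n, ⟪deltaMap μ A (b i) (b j), deltaMap μ A (b i) (b j)⟫ =
        ⟪u i j, u i j⟫ + ⟪v i j, v i j⟫ + ⟪w i j, w i j⟫
        + 2 * ⟪u i j, v i j⟫ - 2 * ⟪u i j, w i j⟫ - 2 * ⟪v i j, w i j⟫ := by
      intro i j
      rw [hdelta, inner_expand]
    unfold bip
    rw [Finset.sum_congr rfl fun i _ => Finset.sum_congr rfl fun j _ => key i j]
    simp only [Finset.sum_add_distrib, Finset.sum_sub_distrib, ← Finset.mul_sum]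
  -- (uu)
  have Suu : ∀ i, ∑ j, ⟪u i j, u i j⟫ = -LinearMap.trace ℝ V (μ (A (b i)) * μ (A (b i))) := by
    intro i
    rw [(show (∑ j, ⟪u i j, u i j⟫) = ∑ j, ⟪μ (A (b i)) (b j), μ (A (b i)) (b j)⟫ from rfl),
      sum_inner_eq_trace b, hskew]
    simp only [Module.End.mul_eq_comp, LinearMap.neg_comp, map_neg]
  -- (vv)
  have Svv : (∑ i, ∑ j, ⟪v i j, v i j⟫) = -4 * ∑ j, ⟪M (A (b j)), A (b j)⟫ := by
    rw [Finset.sum_comm]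
    have key : ∀ j, ∑ i, ⟪v i j, v i j⟫ = -4 * ⟪M (A (b j)), A (b j)⟫ := by
      intro j
      have h1 : ∀ i : Fin n, ⟪v i j, v i j⟫ = -⟪(μ (b i) * μ (b i)) (A (b j)), A (b j)⟫ := by
        intro i
        have h := skew (b i) (A (b j)) (μ (b i) (A (b j)))
        simp only [hv, Module.End.mul_apply]
        rw [real_inner_comm (A (b j)) ((μ (b i)) ((μ (b i)) (A (b j))))]
        exact h
      rw [Finset.sum_congr rfl fun i _ => h1 i, Finset.sum_neg_distrib, ← sum_inner]
      have h4 : (∑ i, (μ (b i) * μ (b i))) = (4:ℝ) • M := by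
        rw [hM, smul_smul]
        norm_num
        exact Finset.sum_congr rfl fun i _ => (Module.End.mul_eq_comp _ _)
      have h5 : (∑ i, (μ (b i) * μ (b i)) (A (b j))) = (4:ℝ) • M (A (b j)) := by
        rw [← LinearMap.sum_apply, h4]; rfl
      rw [h5, real_inner_smul_left, real_inner_comm (A (b j)) (M (A (b j)))]
      ring
    rw [Finset.sum_congr rfl fun j _ => key j, ← Finset.mul_sum]
  -- (ww)
  have Sww : ∀ i, ∑ j, ⟪w i j, w i j⟫ =
      -LinearMap.trace ℝ V (μ (b i) * (μ (b i) * ((A : Module.End ℝ V) * A))) := by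
    intro i
    have h0 : (∑ j, ⟪w i j, w i j⟫) =
        ∑ j, ⟪((A : Module.End ℝ V) * μ (b i)) (b j), ((A : Module.End ℝ V) * μ (b i)) (b j)⟫ :=
      rfl
    rw [h0, sum_inner_eq_trace b]
    simp only [Module.End.mul_eq_comp, LinearMap.adjoint_comp, hAadj, hskew,
      LinearMap.neg_comp, LinearMap.comp_neg, map_neg, LinearMap.comp_assoc, neg_inj]
    rw [(show (μ (b i) ∘ₗ ((A : V →ₗ[ℝ] V) ∘ₗ ((A : V →ₗ[ℝ] V) ∘ₗ μ (b i))))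
        = (μ (b i) ∘ₗ ((A : V →ₗ[ℝ] V) ∘ₗ (A : V →ₗ[ℝ] V))) ∘ₗ μ (b i) by
      simp only [LinearMap.comp_assoc]),
      (show (μ (b i) ∘ₗ ((A : V →ₗ[ℝ] V) ∘ₗ (A : V →ₗ[ℝ] V))) ∘ₗ μ (b i)
        = (μ (b i) ∘ₗ ((A : V →ₗ[ℝ] V) ∘ₗ (A : V →ₗ[ℝ] V))) * μ (b i) from rfl),
      tr_rot]
    simp only [Module.End.mul_eq_comp, LinearMap.comp_assoc]
  -- (uv)
  have Suv : ∀ i, ∑ j, ⟪u i j, v i j⟫ =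
      -LinearMap.trace ℝ V ((A : Module.End ℝ V) * (μ (b i) * μ (A (b i)))) := by
    intro i
    have h0 : (∑ j, ⟪u i j, v i j⟫) =
        ∑ j, ⟪(μ (A (b i))) (b j), (μ (b i) * (A : Module.End ℝ V)) (b j)⟫ := rfl
    rw [h0, sum_inner_eq_trace b]
    simp only [Module.End.mul_eq_comp, LinearMap.adjoint_comp, hAadj, hskew,
      LinearMap.neg_comp, LinearMap.comp_neg, map_neg, LinearMap.comp_assoc, neg_inj]
  -- (uw)
  have Suw : ∀ i, ∑ j, ⟪u i j, w i j⟫ =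
      -LinearMap.trace ℝ V (μ (b i) * ((A : Module.End ℝ V) * μ (A (b i)))) := by
    intro i
    have h0 : (∑ j, ⟪u i j, w i j⟫) =
        ∑ j, ⟪(μ (A (b i))) (b j), ((A : Module.End ℝ V) * μ (b i)) (b j)⟫ := rfl
    rw [h0, sum_inner_eq_trace b]
    simp only [Module.End.mul_eq_comp, LinearMap.adjoint_comp, hAadj, hskew,
      LinearMap.neg_comp, LinearMap.comp_neg, map_neg, LinearMap.comp_assoc, neg_inj]
  -- (vw)
  have Svw : ∀ i, ∑ j, ⟪v i j, w i j⟫ =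
      -LinearMap.trace ℝ V (μ (b i) * ((A : Module.End ℝ V) * (μ (b i) * A))) := by
    intro i
    have h0 : (∑ j, ⟪v i j, w i j⟫) =
        ∑ j, ⟪(μ (b i) * (A : Module.End ℝ V)) (b j), ((A : Module.End ℝ V) * μ (b i)) (b j)⟫ :=
      rfl
    rw [h0, sum_inner_eq_trace b]
    simp only [Module.End.mul_eq_comp, LinearMap.adjoint_comp, hAadj, hskew,
      LinearMap.neg_comp, LinearMap.comp_neg, map_neg, LinearMap.comp_assoc, neg_inj]
  -- symmetry of the matrix of A
  have hAsym : ∀ k i : Fin n, ⟪b k, A (b i)⟫ = ⟪b i, A (b k)⟫ := by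
    intro k i
    rw [← hA (b k) (b i), real_inner_comm]
  -- K2 : the two mixed terms agree
  have K2 : (∑ i, LinearMap.trace ℝ V ((A : Module.End ℝ V) * (μ (b i) * μ (A (b i)))))
      = ∑ i, LinearMap.trace ℝ V (μ (b i) * ((A : Module.End ℝ V) * μ (A (b i)))) := by
    have hL : ∀ i, LinearMap.trace ℝ V ((A : Module.End ℝ V) * (μ (b i) * μ (A (b i))))
        = ∑ k, ⟪b k, A (b i)⟫ *
            LinearMap.trace ℝ V ((A : Module.End ℝ V) * (μ (b i) * μ (b k))) := by
      intro i
      rw [(show (A : Module.End ℝ V) * (μ (b i) * μ (A (b i)))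
          = ((A : Module.End ℝ V) * μ (b i)) * μ (A (b i)) by rw [mul_assoc]),
        expand_tr]
      exact Finset.sum_congr rfl fun k _ => by rw [mul_assoc]
    have hR : ∀ i, LinearMap.trace ℝ V (μ (b i) * ((A : Module.End ℝ V) * μ (A (b i))))
        = ∑ k, ⟪b k, A (b i)⟫ *
            LinearMap.trace ℝ V ((A : Module.End ℝ V) * (μ (b k) * μ (b i))) := by
      intro i
      rw [(show μ (b i) * ((A : Module.End ℝ V) * μ (A (b i)))
          = (μ (b i) * (A : Module.End ℝ V)) * μ (A (b i)) by rw [mul_assoc]),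
        expand_tr]
      refine Finset.sum_congr rfl fun k _ => ?_
      congr 1
      calc LinearMap.trace ℝ V ((μ (b i) * (A : Module.End ℝ V)) * μ (b k))
          = LinearMap.trace ℝ V (μ (b k) * (μ (b i) * (A : Module.End ℝ V))) := tr_rot _ _
        _ = LinearMap.trace ℝ V ((μ (b k) * μ (b i)) * (A : Module.End ℝ V)) := by
              rw [mul_assoc]
        _ = LinearMap.trace ℝ V ((A : Module.End ℝ V) * (μ (b k) * μ (b i))) := tr_rot _ _
    rw [Finset.sum_congr rfl fun i _ => hL i, Finset.sum_congr rfl fun i _ => hR i,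
      Finset.sum_comm]
    refine Finset.sum_congr rfl fun k _ => Finset.sum_congr rfl fun i _ => ?_
    rw [hAsym k i]
  -- K1 : |μ(A·)|² term equals the ad²A² term
  have K1 : (∑ i, LinearMap.trace ℝ V (μ (A (b i)) * μ (A (b i))))
      = ∑ i, LinearMap.trace ℝ V (μ (b i) * (μ (b i) * ((A : Module.End ℝ V) * A))) := by
    have hL : (∑ i, LinearMap.trace ℝ V (μ (A (b i)) * μ (A (b i))))
        = ∑ k, ∑ l, ⟪A (b k), A (b l)⟫ * LinearMap.trace ℝ V (μ (b k) * μ (b l)) := by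
      have step1 : ∀ i, LinearMap.trace ℝ V (μ (A (b i)) * μ (A (b i)))
          = ∑ k, ⟪b k, A (b i)⟫ *
              ∑ l, ⟪b l, A (b i)⟫ * LinearMap.trace ℝ V (μ (b k) * μ (b l)) := by
        intro i
        rw [expand_tr]
        refine Finset.sum_congr rfl fun k _ => ?_
        congr 1
        rw [tr_rot, expand_tr]
      rw [Finset.sum_congr rfl fun i _ => step1 i, Finset.sum_comm]
      refine Finset.sum_congr rfl fun k _ => ?_
      rw [Finset.sum_congr rfl fun i (_ : i ∈ Finset.univ) => Finset.mul_sum Finset.univ _ _,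
        Finset.sum_comm]
      refine Finset.sum_congr rfl fun l _ => ?_
      have key : ∀ i : Fin n, ⟪b k, A (b i)⟫ *
            (⟪b l, A (b i)⟫ * LinearMap.trace ℝ V (μ (b k) * μ (b l)))
          = (⟪A (b k), b i⟫ * ⟪b i, A (b l)⟫) * LinearMap.trace ℝ V (μ (b k) * μ (b l)) := by
        intro i
        have e1 : ⟪b k, A (b i)⟫ = ⟪A (b k), b i⟫ := (hA (b k) (b i)).symm
        have e2 : ⟪b l, A (b i)⟫ = ⟪b i, A (b l)⟫ :=
          (real_inner_comm (A (b i)) (b l)).trans (hA (b i) (b l))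
        rw [e1, e2]; ring
      rw [Finset.sum_congr rfl fun i _ => key i, ← Finset.sum_mul,
        OrthonormalBasis.sum_inner_mul_inner b (A (b k)) (A (b l))]
    have hR : (∑ i, LinearMap.trace ℝ V (μ (b i) * (μ (b i) * ((A : Module.End ℝ V) * A))))
        = ∑ k, ∑ l, ⟪A (b k), A (b l)⟫ * LinearMap.trace ℝ V (μ (b k) * μ (b l)) := by
      have hR1 : (∑ i, LinearMap.trace ℝ V (μ (b i) * (μ (b i) * ((A : Module.End ℝ V) * A))))
          = ∑ m, LinearMap.trace ℝ V (μ (b m) * μ (A (A (b m)))) := by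
        rw [Finset.sum_congr rfl fun i _ =>
          trace_eq_sum_inner' b (μ (b i) * (μ (b i) * ((A : Module.End ℝ V) * A)))]
        rw [Finset.sum_congr rfl fun m _ =>
          trace_eq_sum_inner' b (μ (b m) * μ (A (A (b m))))]
        rw [Finset.sum_comm]
        refine Finset.sum_congr rfl fun m _ => Finset.sum_congr rfl fun i _ => ?_
        simp only [Module.End.mul_apply]
        rw [skew (b i) (μ (b i) (A (A (b m)))) (b m)]
        rw [alt (b i) (b m), inner_neg_right, neg_neg]
        have h1 : ⟪μ (b i) (A (A (b m))), μ (b m) (b i)⟫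
            = -⟪μ (b m) (μ (b i) (A (A (b m)))), b i⟫ := by
          have h2 := skew (b m) (μ (b i) (A (A (b m)))) (b i)
          linarith
        rw [h1, alt (b i) (A (A (b m))), map_neg, inner_neg_left, neg_neg]
      rw [hR1]
      have hR2 : ∀ m, LinearMap.trace ℝ V (μ (b m) * μ (A (A (b m))))
          = ∑ k, ⟪A (b k), A (b m)⟫ * LinearMap.trace ℝ V (μ (b m) * μ (b k)) := by
        intro m
        rw [expand_tr]
        refine Finset.sum_congr rfl fun k _ => ?_
        rw [← hA (b k) (A (b m))]
      rw [Finset.sum_congr rfl fun m _ => hR2 m, Finset.sum_comm]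
      refine Finset.sum_congr rfl fun k _ => Finset.sum_congr rfl fun m _ => ?_
      rw [tr_rot]
    rw [hL, hR]
  -- the Casimir term
  have hone : ∀ P : Module.End ℝ V, LinearMap.trace ℝ V ((opComm P (opComm P A)) * A)
      = 2 * LinearMap.trace ℝ V (P * (P * ((A : Module.End ℝ V) * A)))
        - 2 * LinearMap.trace ℝ V (P * (A * (P * A))) := by
    intro P
    simp only [opComm, ← Module.End.mul_eq_comp, mul_sub, sub_mul, map_sub, mul_assoc]
    rw [tr_rot (A : Module.End ℝ V) (P * (P * A))]
    simp only [mul_assoc]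
    ring
  have hcas : eip (casOp b μ A) A =
      -2 * (∑ i, LinearMap.trace ℝ V (μ (b i) * (μ (b i) * ((A : Module.End ℝ V) * A))))
      + 2 * (∑ i, LinearMap.trace ℝ V (μ (b i) * ((A : Module.End ℝ V) * (μ (b i) * A)))) := by
    unfold eip casOp
    rw [hAadj, ← Module.End.mul_eq_comp, neg_mul, map_neg, Finset.sum_mul, map_sum]
    rw [Finset.sum_congr rfl fun i _ => hone (μ (b i))]
    rw [Finset.sum_sub_distrib, ← Finset.mul_sum, ← Finset.mul_sum]
    ring
  -- final assembly
  rw [hsplit, Svv, hcas]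
  rw [Finset.sum_congr rfl fun i _ => Suu i,
    Finset.sum_congr rfl fun i _ => Sww i,
    Finset.sum_congr rfl fun i _ => Suv i,
    Finset.sum_congr rfl fun i _ => Suw i,
    Finset.sum_congr rfl fun i _ => Svw i]
  simp only [Finset.sum_neg_distrib]
  linarith [K1, K2]
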